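/- Let k be a field and let g, h ∈ k[x] be coprime polynomials with g(0) ≠ 0 and h(0) ≠ 0 such that each of g and h satisfies the inversion criterion: writing g (resp. h) with distinct roots r_i of multiplicities m_i, leading coefficient g_a (resp. h_b) and constant term g_0 (resp. h_0), one has ∏_{i<j} (r_i r_j)^{2 m_i m_j} = (g_0/g_a)^{2·deg(g)−2} (resp. the analogous equation for h). Then f = gh also satisfies the inversion criterion, and consequently tol(f) = tol(f*). -/

import Mathlib

open Polynomial
open scoped Classical

/-- The tolerant of a polynomial `f` over a field `K` (intended: `K` an algebraic closure and
`f` the image of a polynomial over a subfield): writing `f = a_n ∏ (X - r_i)^{m_i}` with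
`r_1, …, r_s` distinct, `tol f = a_n^{2n-2} ∏_{i<j} (r_i - r_j)^{2 m_i m_j}`.  The product is
taken over unordered pairs of distinct roots; this is well defined since the exponents are even. -/
noncomputable def tol {K : Type*} [Field K] (f : K[X]) : K :=
  f.leadingCoeff ^ (2 * (f.natDegree : ℤ) - 2) *
    ∏ p ∈ f.roots.toFinset.sym2.filter (fun p => ¬ p.IsDiag),
      Sym2.lift ⟨fun a b => ((a - b) ^ 2) ^ (f.rootMultiplicity a * f.rootMultiplicity b),
        fun a b => by
          dsimp only
          rw [mul_comm (rootMultiplicity a f), show (a - b) ^ 2 = (b - a) ^ 2 by ring]⟩ p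

/-- The product `∏_{i<j} (r_i r_j)^{2 m_i m_j}` over the distinct roots `r_i` of `f` with
multiplicities `m_i` (product over unordered pairs of distinct roots; well defined since the
factors are symmetric). -/
noncomputable def rootPairProd {K : Type*} [Field K] (f : K[X]) : K :=
  ∏ p ∈ f.roots.toFinset.sym2.filter (fun p => ¬ p.IsDiag),
    Sym2.lift ⟨fun a b => (a * b) ^ (2 * f.rootMultiplicity a * f.rootMultiplicity b),
      fun a b => by
        dsimp only
        rw [mul_comm a b, mul_assoc, mul_assoc, mul_comm (rootMultiplicity a f)]⟩ p

/-- `f` satisfies the inversion criterion if `∏_{i<j} (r_i r_j)^{2 m_i m_j} = (a_0/a_n)^{2n-2}`,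
where the `r_i` are the distinct roots of `f` in the algebraic closure with multiplicities `m_i`,
`a_n` is the leading coefficient and `a_0` the constant term. This is equivalent to
`tol f = tol f*`. -/
def InversionCriterion {k : Type*} [Field k] (f : k[X]) : Prop :=
  rootPairProd (f.map (algebraMap k (AlgebraicClosure k))) =
    (algebraMap k (AlgebraicClosure k) (f.coeff 0) /
        algebraMap k (AlgebraicClosure k) f.leadingCoeff) ^ (2 * (f.natDegree : ℤ) - 2)


section Aux
open Finset

variable {α : Type*} {M : Type*} [CommMonoid M]

theorem sym2_prod_union [DecidableEq α] {s t : Finset α} (hd : Disjoint s t) (F : Sym2 α → M) :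
    ∏ p ∈ (s ∪ t).sym2.filter (fun p => ¬ p.IsDiag), F p =
      ((∏ p ∈ s.sym2.filter (fun p => ¬ p.IsDiag), F p) *
        ∏ p ∈ t.sym2.filter (fun p => ¬ p.IsDiag), F p) *
        ∏ a ∈ s, ∏ b ∈ t, F s(a, b) := by
  classical
  have hdis : ∀ x, x ∈ s → x ∈ t → False := fun x hx ht => Finset.disjoint_left.mp hd hx ht
  have hset : (s ∪ t).sym2.filter (fun p => ¬ p.IsDiag) =
      (s.sym2.filter (fun p => ¬ p.IsDiag) ∪ t.sym2.filter (fun p => ¬ p.IsDiag)) ∪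
        (s ×ˢ t).image (fun q => s(q.1, q.2)) := by
    ext p
    induction p with
    | _ a b =>
      simp only [Finset.mem_filter, Finset.mk_mem_sym2_iff, Finset.mem_union, Finset.mem_image,
        Finset.mem_product, Sym2.isDiag_iff_proj_eq, Prod.exists, Sym2.eq_iff]
      constructor
      · rintro ⟨⟨ha | ha, hb | hb⟩, hne⟩
        · exact Or.inl (Or.inl ⟨⟨ha, hb⟩, hne⟩)
        · exact Or.inr ⟨a, b, ⟨ha, hb⟩, Or.inl ⟨rfl, rfl⟩⟩
        · exact Or.inr ⟨b, a, ⟨hb, ha⟩, Or.inr ⟨rfl, rfl⟩⟩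
        · exact Or.inl (Or.inr ⟨⟨ha, hb⟩, hne⟩)
      · rintro ((⟨⟨ha, hb⟩, hne⟩ | ⟨⟨ha, hb⟩, hne⟩) | ⟨x, y, ⟨hx, hy⟩, (⟨rfl, rfl⟩ | ⟨rfl, rfl⟩)⟩)
        · exact ⟨⟨Or.inl ha, Or.inl hb⟩, hne⟩
        · exact ⟨⟨Or.inr ha, Or.inr hb⟩, hne⟩
        · exact ⟨⟨Or.inl hx, Or.inr hy⟩, fun hab => hdis x hx (by rw [hab]; exact hy)⟩
        · exact ⟨⟨Or.inr hy, Or.inl hx⟩, fun hab => hdis x hx (by rw [← hab]; exact hy)⟩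
  rw [hset, Finset.prod_union, Finset.prod_union, Finset.prod_image, Finset.prod_product]
  · rintro ⟨a, b⟩ hab ⟨c, d⟩ hcd heq
    simp only [Finset.mem_coe, Finset.mem_product] at hab hcd
    rw [Sym2.eq_iff] at heq
    rcases heq with ⟨rfl, rfl⟩ | ⟨rfl, rfl⟩
    · rfl
    · exact absurd hab.1 (fun h => hdis _ h hcd.2)
  · -- disjoint within-pairs
    rw [Finset.disjoint_left]
    intro p hp hp'
    induction p with
    | _ a b =>
      simp only [Finset.mem_filter, Finset.mk_mem_sym2_iff] at hp hp'
      exact hdis a hp.1.1 hp'.1.1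
  · rw [Finset.disjoint_left]
    intro p hp hp'
    induction p with
    | _ a b =>
      simp only [Finset.mem_filter, Finset.mk_mem_sym2_iff, Finset.mem_union] at hp
      simp only [Finset.mem_image, Finset.mem_product, Prod.exists, Sym2.eq_iff] at hp'
      obtain ⟨x, y, ⟨hx, hy⟩, (⟨rfl, rfl⟩ | ⟨rfl, rfl⟩)⟩ := hp'
      · rcases hp with (⟨⟨h1, h2⟩, -⟩ | ⟨⟨h1, h2⟩, -⟩)
        · exact hdis y h2 hy
        · exact hdis x hx h1
      · rcases hp with (⟨⟨h1, h2⟩, -⟩ | ⟨⟨h1, h2⟩, -⟩)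
        · exact hdis y h1 hy
        · exact hdis x hx h2

theorem sym2_prod_image [DecidableEq α] {s : Finset α} {σ : α → α} (hinj : Set.InjOn σ s)
    (F : Sym2 α → M) :
    ∏ p ∈ (s.image σ).sym2.filter (fun p => ¬ p.IsDiag), F p =
      ∏ p ∈ s.sym2.filter (fun p => ¬ p.IsDiag), F (p.map σ) := by
  classical
  refine (Finset.prod_bij (fun p _ => Sym2.map σ p) ?_ ?_ ?_ ?_).symm
  · intro p hp
    induction p with
    | _ a b =>
      simp only [Finset.mem_filter, Finset.mk_mem_sym2_iff, Sym2.map_pair_eq,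
        Sym2.isDiag_iff_proj_eq] at hp ⊢
      exact ⟨⟨Finset.mem_image_of_mem _ hp.1.1, Finset.mem_image_of_mem _ hp.1.2⟩,
        fun h => hp.2 (hinj hp.1.1 hp.1.2 h)⟩
  · intro p hp q hq heq
    induction p with
    | _ a b =>
      induction q with
      | _ c d =>
        simp only [Finset.mem_filter, Finset.mk_mem_sym2_iff] at hp hq
        simp only [Sym2.map_pair_eq, Sym2.eq_iff] at heq ⊢
        rcases heq with ⟨h1, h2⟩ | ⟨h1, h2⟩
        · exact Or.inl ⟨hinj hp.1.1 hq.1.1 h1, hinj hp.1.2 hq.1.2 h2⟩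
        · exact Or.inr ⟨hinj hp.1.1 hq.1.2 h1, hinj hp.1.2 hq.1.1 h2⟩
  · intro p hp
    induction p with
    | _ a b =>
      simp only [Finset.mem_filter, Finset.mk_mem_sym2_iff, Finset.mem_image,
        Sym2.isDiag_iff_proj_eq] at hp
      obtain ⟨⟨⟨x, hx, rfl⟩, ⟨y, hy, rfl⟩⟩, hne⟩ := hp
      refine ⟨s(x, y), ?_, by simp [Sym2.map_pair_eq]⟩
      simp only [Finset.mem_filter, Finset.mk_mem_sym2_iff, Sym2.isDiag_iff_proj_eq]
      exact ⟨⟨hx, hy⟩, fun h => hne (by rw [h])⟩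
  · intro p hp; rfl

end Aux

section AlgClosed
open Finset

variable {K : Type*} [Field K] [IsAlgClosed K]

set_option linter.unusedSectionVars false

theorem prod_roots_sq (P : K[X]) (hP : P ≠ 0) :
    P.roots.prod ^ 2 = (P.coeff 0 / P.leadingCoeff) ^ 2 := by
  have hlc : P.leadingCoeff ≠ 0 := leadingCoeff_ne_zero.mpr hP
  set Q := P * C P.leadingCoeff⁻¹ with hQ
  have hmon : Q.Monic := monic_mul_leadingCoeff_inv hP
  have hsp : Q.Splits := IsAlgClosed.splits Q
  have h := hsp.coeff_zero_eq_prod_roots_of_monic hmon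
  have hroots : Q.roots = P.roots := by
    rw [hQ, mul_comm, roots_C_mul _ (inv_ne_zero hlc)]
  have hc : Q.coeff 0 = P.coeff 0 * P.leadingCoeff⁻¹ := by
    rw [hQ, mul_coeff_zero, coeff_C_zero]
  rw [hc, hroots] at h
  have : (P.coeff 0 * P.leadingCoeff⁻¹) ^ 2 = (((-1 : K) ^ Q.natDegree) ^ 2) * P.roots.prod ^ 2 := by
    rw [h]; ring
  have h2 : ((-1 : K) ^ Q.natDegree) ^ 2 = 1 := by
    rw [← pow_mul, mul_comm, pow_mul, neg_one_sq, one_pow]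
  rw [h2, one_mul] at this
  rw [div_eq_mul_inv, ← this]

theorem reverse_linear (r : K) (hr : r ≠ 0) :
    (X - C r).reverse = C (-r) * (X - C r⁻¹) := by
  have h1 : (X : K[X]) - C r = X + C (-r) := by rw [map_neg]; ring
  have hX : (X : K[X]).reverse = 1 := by
    rw [← one_mul (X : K[X]), reverse_mul_X]
    simpa using reverse_C (1 : K)
  rw [h1, reverse_add_C, hX, natDegree_X, pow_one, mul_sub, ← C_mul, neg_mul,
    mul_inv_cancel₀ hr]
  simp only [map_neg, map_one]
  ring

theorem reverse_multiset_prod (R : Multiset K) (h0 : (0 : K) ∉ R) :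
    (R.map fun r => X - C r).prod.reverse =
      C (R.map fun r => -r).prod * (R.map fun r => X - C r⁻¹).prod := by
  induction R using Multiset.induction with
  | empty => simpa using reverse_C (1 : K)
  | cons r R ih =>
    have hr : r ≠ 0 := fun h => h0 (h ▸ Multiset.mem_cons_self r R)
    have h0' : (0 : K) ∉ R := fun h => h0 (Multiset.mem_cons_of_mem h)
    simp only [Multiset.map_cons, Multiset.prod_cons]
    rw [reverse_mul_of_domain, ih h0', reverse_linear r hr, map_mul]
    ring

theorem roots_reverse' (P : K[X]) (h0 : P.coeff 0 ≠ 0) :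
    P.reverse.roots = P.roots.map (·⁻¹) := by
  have hP : P ≠ 0 := fun h => h0 (by simp [h])
  have hsp : P.Splits := IsAlgClosed.splits P
  have hcard : Multiset.card P.roots = P.natDegree := (splits_iff_card_roots).mp hsp
  have hfac := C_leadingCoeff_mul_prod_multiset_X_sub_C (p := P) hcard
  have h0r : (0 : K) ∉ P.roots := fun h => h0 (by
    have := isRoot_of_mem_roots h
    rwa [IsRoot, ← coeff_zero_eq_eval_zero] at this)
  have hlc : P.leadingCoeff ≠ 0 := leadingCoeff_ne_zero.mpr hP
  conv_lhs => rw [← hfac]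
  rw [reverse_mul_of_domain, reverse_C, reverse_multiset_prod _ h0r, ← mul_assoc, ← C_mul]
  have hprodne : (P.roots.map fun r => -r).prod ≠ 0 := by
    apply Multiset.prod_ne_zero
    intro h
    obtain ⟨r, hr, hr0⟩ := Multiset.mem_map.mp h
    rw [neg_eq_zero] at hr0
    exact h0r (hr0 ▸ hr)
  rw [roots_C_mul _ (mul_ne_zero hlc hprodne)]
  have : (P.roots.map fun r => X - C r⁻¹) = ((P.roots.map (·⁻¹)).map fun a => X - C a) := by
    rw [Multiset.map_map]; rfl
  rw [this, roots_multiset_prod_X_sub_C]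

theorem tol_reverse (P : K[X]) (h0 : P.coeff 0 ≠ 0)
    (hcrit : rootPairProd P = (P.coeff 0 / P.leadingCoeff) ^ (2 * (P.natDegree : ℤ) - 2)) :
    tol P = tol P.reverse := by
  classical
  have hP : P ≠ 0 := fun h => h0 (by simp [h])
  have hlc : P.leadingCoeff ≠ 0 := leadingCoeff_ne_zero.mpr hP
  have hdeg : P.reverse.natDegree = P.natDegree := by
    rw [reverse_natDegree, natTrailingDegree_eq_zero.mpr (Or.inr h0), Nat.sub_zero]
  have hlcrev : P.reverse.leadingCoeff = P.coeff 0 := by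
    rw [reverse_leadingCoeff, trailingCoeff, natTrailingDegree_eq_zero.mpr (Or.inr h0)]
  have hroots := roots_reverse' P h0
  have hFin : P.reverse.roots.toFinset = P.roots.toFinset.image (·⁻¹) := by
    rw [hroots, Multiset.toFinset_map]
  have hmult : ∀ a : K, P.reverse.rootMultiplicity a⁻¹ = P.rootMultiplicity a := by
    intro a
    rw [← count_roots, ← count_roots, hroots, Multiset.count_map_eq_count' _ _ inv_injective]
  have hmem0 : ∀ a ∈ P.roots.toFinset, a ≠ 0 := by
    intro a ha h
    rw [Multiset.mem_toFinset] at ha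
    exact h0 (by have := isRoot_of_mem_roots ha; rwa [IsRoot, h, ← coeff_zero_eq_eval_zero] at this)
  unfold tol
  rw [hdeg, hlcrev, hFin, sym2_prod_image inv_injective.injOn]
  have key : ∏ p ∈ P.roots.toFinset.sym2.filter (fun p => ¬ p.IsDiag),
      Sym2.lift ⟨fun a b => ((a - b) ^ 2) ^
          (P.reverse.rootMultiplicity a * P.reverse.rootMultiplicity b),
        fun a b => by
          dsimp only
          rw [mul_comm (rootMultiplicity a P.reverse),
            show (a - b) ^ 2 = (b - a) ^ 2 by ring]⟩ (p.map (·⁻¹)) =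
      (∏ p ∈ P.roots.toFinset.sym2.filter (fun p => ¬ p.IsDiag),
        Sym2.lift ⟨fun a b => ((a - b) ^ 2) ^ (P.rootMultiplicity a * P.rootMultiplicity b),
          fun a b => by
            dsimp only
            rw [mul_comm (rootMultiplicity a P), show (a - b) ^ 2 = (b - a) ^ 2 by ring]⟩ p) *
        (rootPairProd P)⁻¹ := by
    unfold rootPairProd
    rw [← Finset.prod_inv_distrib, ← Finset.prod_mul_distrib]
    refine Finset.prod_congr rfl ?_
    intro p hp
    induction p with
    | _ a b =>
      simp only [Finset.mem_filter, Finset.mk_mem_sym2_iff] at hp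
      have ha0 : a ≠ 0 := hmem0 a hp.1.1
      have hb0 : b ≠ 0 := hmem0 b hp.1.2
      rw [Sym2.map_pair_eq]
      rw [Sym2.lift_mk, Sym2.lift_mk, Sym2.lift_mk]
      dsimp only
      rw [hmult a, hmult b]
      have hab : (a⁻¹ - b⁻¹) ^ 2 = (a - b) ^ 2 * ((a * b) ^ 2)⁻¹ := by
        field_simp
        ring
      rw [hab, mul_pow, ← inv_pow, ← pow_mul, show 2 * (P.rootMultiplicity a * P.rootMultiplicity b)
        = 2 * P.rootMultiplicity a * P.rootMultiplicity b by ring]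
      congr 1
      rw [← inv_pow, ← pow_mul, mul_assoc]
  rw [key, hcrit, div_zpow]
  have h1 : P.coeff 0 ^ (2 * (P.natDegree : ℤ) - 2) ≠ 0 := zpow_ne_zero _ h0
  have h2 : P.leadingCoeff ^ (2 * (P.natDegree : ℤ) - 2) ≠ 0 := zpow_ne_zero _ hlc
  field_simp

theorem rootPairProd_mul (G H : K[X]) (hG : G ≠ 0) (hH : H ≠ 0) (hcop : IsCoprime G H) :
    rootPairProd (G * H) = (rootPairProd G * rootPairProd H) *
      ((G.roots.prod ^ 2) ^ H.natDegree * (H.roots.prod ^ 2) ^ G.natDegree) := by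
  classical
  have hGH : G * H ≠ 0 := mul_ne_zero hG hH
  obtain ⟨u, v, huv⟩ := hcop
  have hnoroot : ∀ a : K, G.IsRoot a → H.IsRoot a → False := by
    intro a ha hb
    have := congrArg (eval a) huv
    simp only [eval_add, eval_mul, eval_one, ha.eq_zero, hb.eq_zero, mul_zero, add_zero,
      zero_add] at this
    exact zero_ne_one this
  have hd : Disjoint G.roots.toFinset H.roots.toFinset := by
    rw [Finset.disjoint_left]
    intro a ha hb
    rw [Multiset.mem_toFinset] at ha hb
    exact hnoroot a (isRoot_of_mem_roots ha) (isRoot_of_mem_roots hb)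
  have hmultGH : ∀ a : K, (G * H).rootMultiplicity a = G.rootMultiplicity a + H.rootMultiplicity a :=
    fun a => rootMultiplicity_mul hGH
  have hmG : ∀ a ∈ G.roots.toFinset, (G * H).rootMultiplicity a = G.rootMultiplicity a := by
    intro a ha
    rw [hmultGH, rootMultiplicity_eq_zero (fun hb => hnoroot a
      (isRoot_of_mem_roots (Multiset.mem_toFinset.mp ha)) hb), add_zero]
  have hmH : ∀ b ∈ H.roots.toFinset, (G * H).rootMultiplicity b = H.rootMultiplicity b := by
    intro b hb
    rw [hmultGH, rootMultiplicity_eq_zero (fun ha => hnoroot b ha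
      (isRoot_of_mem_roots (Multiset.mem_toFinset.mp hb))), zero_add]
  have hsumG : ∑ a ∈ G.roots.toFinset, G.rootMultiplicity a = G.natDegree := by
    rw [← (splits_iff_card_roots).mp (IsAlgClosed.splits G)]
    rw [Finset.sum_congr rfl (fun a _ => (count_roots G).symm)]
    exact Multiset.toFinset_sum_count_eq _
  have hsumH : ∑ b ∈ H.roots.toFinset, H.rootMultiplicity b = H.natDegree := by
    rw [← (splits_iff_card_roots).mp (IsAlgClosed.splits H)]
    rw [Finset.sum_congr rfl (fun a _ => (count_roots H).symm)]
    exact Multiset.toFinset_sum_count_eq _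
  have hprodG : ∏ a ∈ G.roots.toFinset, a ^ G.rootMultiplicity a = G.roots.prod := by
    rw [Finset.prod_multiset_count]
    exact Finset.prod_congr rfl (fun a _ => by rw [count_roots])
  have hprodH : ∏ b ∈ H.roots.toFinset, b ^ H.rootMultiplicity b = H.roots.prod := by
    rw [Finset.prod_multiset_count]
    exact Finset.prod_congr rfl (fun a _ => by rw [count_roots])
  have hFin : (G * H).roots.toFinset = G.roots.toFinset ∪ H.roots.toFinset := by
    rw [roots_mul hGH, Multiset.toFinset_add]
  unfold rootPairProd
  rw [hFin, sym2_prod_union hd]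
  congr 1
  · congr 1
    · refine Finset.prod_congr rfl ?_
      intro p hp
      induction p with
      | _ a b =>
        simp only [Finset.mem_filter, Finset.mk_mem_sym2_iff] at hp
        rw [Sym2.lift_mk, Sym2.lift_mk]
        dsimp only
        rw [hmG a hp.1.1, hmG b hp.1.2]
    · refine Finset.prod_congr rfl ?_
      intro p hp
      induction p with
      | _ a b =>
        simp only [Finset.mem_filter, Finset.mk_mem_sym2_iff] at hp
        rw [Sym2.lift_mk, Sym2.lift_mk]
        dsimp only
        rw [hmH a hp.1.1, hmH b hp.1.2]
  · -- cross term
    have step : ∀ a ∈ G.roots.toFinset, ∀ b ∈ H.roots.toFinset,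
        Sym2.lift ⟨fun a b => (a * b) ^ (2 * (G * H).rootMultiplicity a *
            (G * H).rootMultiplicity b),
          fun a b => by
            dsimp only
            rw [mul_comm a b, mul_assoc, mul_assoc, mul_comm (rootMultiplicity a (G * H))]⟩
          s(a, b) =
          ((a ^ G.rootMultiplicity a) ^ 2) ^ H.rootMultiplicity b *
            ((b ^ H.rootMultiplicity b) ^ 2) ^ G.rootMultiplicity a := by
      intro a ha b hb
      rw [Sym2.lift_mk]
      dsimp only
      rw [hmG a ha, hmH b hb, mul_pow, ← pow_mul, ← pow_mul, ← pow_mul, ← pow_mul]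
      ring
    rw [Finset.prod_congr rfl (fun a ha => Finset.prod_congr rfl (fun b hb => step a ha b hb))]
    simp only [Finset.prod_mul_distrib, Finset.prod_pow_eq_pow_sum, Finset.prod_pow]
    rw [hsumH, hprodH, hprodG, hsumG]

theorem zpow_aux {K : Type*} [Field K] (x y : K) (hx : x ≠ 0) (hy : y ≠ 0) (m n : ℕ) :
    x ^ (2 * (m : ℤ) - 2) * y ^ (2 * (n : ℤ) - 2) * ((x ^ 2) ^ n * (y ^ 2) ^ m) =
      (x * y) ^ (2 * ((m + n : ℕ) : ℤ) - 2) := by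
  have h1 : ((x ^ 2) ^ n : K) = x ^ ((2 * n : ℕ) : ℤ) := by
    rw [← pow_mul, zpow_natCast]
  have h2 : ((y ^ 2) ^ m : K) = y ^ ((2 * m : ℕ) : ℤ) := by
    rw [← pow_mul, zpow_natCast]
  rw [h1, h2, mul_zpow]
  rw [show x ^ (2 * (m : ℤ) - 2) * y ^ (2 * (n : ℤ) - 2) * (x ^ ((2 * n : ℕ) : ℤ) * y ^ ((2 * m : ℕ) : ℤ))
    = (x ^ (2 * (m : ℤ) - 2) * x ^ ((2 * n : ℕ) : ℤ)) * (y ^ (2 * (n : ℤ) - 2) * y ^ ((2 * m : ℕ) : ℤ)) by ring]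
  rw [← zpow_add₀ hx, ← zpow_add₀ hy]
  congr 1 <;> · congr 1; push_cast; ring

end AlgClosed

/-- If `g, h ∈ k[x]` are coprime, `g(0) ≠ 0`, `h(0) ≠ 0`, and both satisfy the inversion
criterion, then `f = g h` satisfies the inversion criterion, and consequently
`tol f = tol f*`. -/
theorem inversionCriterion_mul {k : Type*} [Field k] (g h : k[X])
    (hg0 : g.eval 0 ≠ 0) (hh0 : h.eval 0 ≠ 0) (hcop : IsCoprime g h)
    (hg : InversionCriterion g) (hh : InversionCriterion h) :
    InversionCriterion (g * h) ∧
      tol ((g * h).map (algebraMap k (AlgebraicClosure k))) =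
        tol ((g * h).reverse.map (algebraMap k (AlgebraicClosure k))) := by
  classical
  have hg' : g ≠ 0 := fun hz => hg0 (by simp [hz])
  have hh' : h ≠ 0 := fun hz => hh0 (by simp [hz])
  set φ := algebraMap k (AlgebraicClosure k) with hφ
  have hg0c : g.coeff 0 ≠ 0 := by rwa [coeff_zero_eq_eval_zero]
  have hh0c : h.coeff 0 ≠ 0 := by rwa [coeff_zero_eq_eval_zero]
  have hgl : g.leadingCoeff ≠ 0 := leadingCoeff_ne_zero.mpr hg'
  have hhl : h.leadingCoeff ≠ 0 := leadingCoeff_ne_zero.mpr hh'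
  have hinj : Function.Injective φ := φ.injective
  have hGne : g.map φ ≠ 0 := map_ne_zero hg'
  have hHne : h.map φ ≠ 0 := map_ne_zero hh'
  have hcopF : IsCoprime (g.map φ) (h.map φ) := by
    simpa using hcop.map (mapRingHom φ)
  have hx : φ (g.coeff 0) / φ g.leadingCoeff ≠ 0 :=
    div_ne_zero (fun w => hg0c (hinj (by simpa using w)))
      (fun w => hgl (hinj (by simpa using w)))
  have hy : φ (h.coeff 0) / φ h.leadingCoeff ≠ 0 :=
    div_ne_zero (fun w => hh0c (hinj (by simpa using w)))
      (fun w => hhl (hinj (by simpa using w)))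
  have hcritGH : InversionCriterion (g * h) := by
    unfold InversionCriterion at hg hh ⊢
    rw [Polynomial.map_mul, rootPairProd_mul _ _ hGne hHne hcopF, hg, hh,
      prod_roots_sq _ hGne, prod_roots_sq _ hHne, coeff_map, coeff_map,
      leadingCoeff_map, leadingCoeff_map, natDegree_map, natDegree_map]
    rw [zpow_aux _ _ hx hy g.natDegree h.natDegree]
    rw [mul_coeff_zero, leadingCoeff_mul, natDegree_mul hg' hh', map_mul, map_mul,
      div_mul_div_comm]
  refine ⟨hcritGH, ?_⟩
  have h0P : ((g * h).map φ).coeff 0 ≠ 0 := by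
    rw [coeff_map, mul_coeff_zero]
    exact fun w => (mul_ne_zero hg0c hh0c) (hinj (by simpa using w))
  have hcritP : rootPairProd ((g * h).map φ) =
      (((g * h).map φ).coeff 0 / ((g * h).map φ).leadingCoeff) ^
        (2 * ((((g * h).map φ).natDegree : ℤ)) - 2) := by
    unfold InversionCriterion at hcritGH
    rw [coeff_map, leadingCoeff_map, natDegree_map]
    exact hcritGH
  have hrev : (g * h).reverse.map φ = ((g * h).map φ).reverse := by
    rw [reverse, reverse, reflect_map, natDegree_map]
  rw [hrev]
  exact tol_reverse _ h0P hcritP
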